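/- Let Ω be a finite set whose cardinality is a prime number p ≥ 5, and let G be a solvable subgroup of the symmetric group on Ω acting primitively on Ω. Then (G, Ω) is nice: there exist subsets Δ₁, Δ₂ of Ω with |Δ₁| < |Δ₂| and 2|Δ₂| ≤ |Ω| such that for j = 1, 2, the setwise stabilizer of Δ_j in G has a normal elementary abelian 3-subgroup (possibly trivial) with 2-group quotient. -/

import Mathlib

open Pointwise

/-- A finite group `S` has the "required structure" if it has a (possibly trivial) normal
elementary abelian 3-subgroup `N` such that the quotient `S/N` is a 2-group. -/
def RequiredStructure (S : Type*) [Group S] : Prop :=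
  ∃ (N : Subgroup S) (hN : N.Normal),
    (∀ x ∈ N, ∀ y ∈ N, x * y = y * x) ∧ (∀ x ∈ N, x ^ 3 = 1) ∧
    @IsPGroup 2 (S ⧸ N) (@QuotientGroup.Quotient.group S _ N hN)

/-- A finite permutation group `(G, Ω)` is "nice" if there are subsets `Δ₁, Δ₂` of `Ω`
with `|Δ₁| < |Δ₂| ≤ |Ω|/2` whose setwise stabilizers in `G` both have the required
structure. -/
def IsNice (Ω : Type*) [Fintype Ω] (G : Subgroup (Equiv.Perm Ω)) : Prop :=
  ∃ Δ₁ Δ₂ : Set Ω, Δ₁.ncard < Δ₂.ncard ∧ 2 * Δ₂.ncard ≤ Fintype.card Ω ∧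
    RequiredStructure (MulAction.stabilizer G Δ₁) ∧
    RequiredStructure (MulAction.stabilizer G Δ₂)

/-- A permutation group `(G, Ω)` is primitive if it is transitive and every block is trivial. -/
def IsPrimitivePermGroup (Ω : Type*) [Fintype Ω] (G : Subgroup (Equiv.Perm Ω)) : Prop :=
  MulAction.IsPretransitive G Ω ∧
    ∀ B : Set Ω, MulAction.IsBlock G B → MulAction.IsTrivialBlock B

/-- A 2-group has the required structure (take `N = ⊥`). -/
theorem requiredStructure_of_isPGroup_two {S : Type*} [Group S] (h : IsPGroup 2 S) :
    RequiredStructure S := by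
  refine ⟨⊥, inferInstance, ?_, ?_, ?_⟩
  · intro x hx y hy
    rw [Subgroup.mem_bot] at hx hy
    subst hx; subst hy; rfl
  · intro x hx
    rw [Subgroup.mem_bot] at hx
    subst hx; simp
  · exact h.to_quotient ⊥

/-- A group of exponent dividing 2 has the required structure. -/
theorem requiredStructure_of_sq {S : Type*} [Group S] (h : ∀ s : S, s ^ 2 = 1) :
    RequiredStructure S :=
  requiredStructure_of_isPGroup_two (fun s => ⟨1, by rw [pow_one]; exact h s⟩)

/-- In a solvable primitive permutation group of prime degree, a nontrivial element
fixes at most one point. -/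
theorem two_fixed_points {Ω : Type*} [Fintype Ω] {G : Subgroup (Equiv.Perm Ω)}
    (hsolv : IsSolvable G) (hprim : IsPrimitivePermGroup Ω G)
    (hp : (Fintype.card Ω).Prime)
    {g : G} {x y : Ω} (hx : g • x = x) (hy : g • y = y) (hxy : x ≠ y) : g = 1 := by
  classical
  obtain ⟨htrans, hblock⟩ := hprim
  -- faithfulness
  have hfaithful : ∀ h : G, (∀ z : Ω, h • z = z) → h = 1 := by
    intro h hh
    refine Subtype.ext (Equiv.ext fun z => ?_)
    exact hh z
  -- G is nontrivial
  have hcard1 : 1 < Fintype.card Ω := hp.one_lt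
  have hGnt : derivedSeries G 0 ≠ ⊥ := by
    rw [derivedSeries_zero]
    intro htop
    obtain ⟨u, v, huv⟩ := Fintype.exists_pair_of_one_lt_card hcard1
    obtain ⟨g', hg'⟩ := htrans.exists_smul_eq u v
    have hg1 : g' = 1 := by
      have : g' ∈ (⊥ : Subgroup G) := htop ▸ Subgroup.mem_top g'
      rwa [Subgroup.mem_bot] at this
    rw [hg1, one_smul] at hg'
    exact huv hg'
  -- least vanishing term of the derived series
  obtain ⟨nn, hnn⟩ := hsolv
  have hex : ∃ k, derivedSeries G k = ⊥ := ⟨nn, hnn⟩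
  set m := Nat.find hex with hmdef
  have hm : derivedSeries G m = ⊥ := Nat.find_spec hex
  have hm0 : m ≠ 0 := fun h0 => hGnt (h0 ▸ hm)
  set A : Subgroup G := derivedSeries G (m - 1) with hAdef
  have hAne : A ≠ ⊥ := Nat.find_min hex (by omega)
  haveI hAnorm : A.Normal := derivedSeries_normal G (m - 1)
  have hcomm : ∀ a ∈ A, ∀ b ∈ A, a * b = b * a := by
    intro a ha b hb
    have hAA : derivedSeries G m = ⁅A, A⁆ := by
      conv_lhs => rw [show m = (m - 1) + 1 by omega]
      exact derivedSeries_succ G (m - 1)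
    open scoped commutatorElement in
    have : ⁅a, b⁆ ∈ (⊥ : Subgroup G) := by
      rw [← hm, hAA]
      exact Subgroup.commutator_mem_commutator ha hb
    rw [Subgroup.mem_bot] at this
    exact commutatorElement_eq_one_iff_mul_comm.mp this
  -- A is transitive
  have htransA : ∀ u v : Ω, ∃ b ∈ A, b • u = v := by
    have horb : ∃ a0 : Ω, MulAction.orbit A a0 = Set.univ := by
      by_contra hnone
      push_neg at hnone
      apply hAne
      ext b
      simp only [Subgroup.mem_bot]
      constructor
      · intro hb
        apply hfaithful
        intro z
        have hB := hblock _ (MulAction.IsBlock.orbit_of_normal (N := A) z)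
        rcases hB with hB | hB
        · exact hB (MulAction.mem_orbit z (⟨b, hb⟩ : A)) (MulAction.mem_orbit_self z)
        · exact absurd hB (hnone z)
      · rintro rfl; exact one_mem A
    obtain ⟨a0, ha0⟩ := horb
    intro u v
    have hu : u ∈ MulAction.orbit A a0 := ha0 ▸ Set.mem_univ u
    have hv : v ∈ MulAction.orbit A a0 := ha0 ▸ Set.mem_univ v
    obtain ⟨⟨b, hb⟩, hbu⟩ := hu
    obtain ⟨⟨c, hc⟩, hcv⟩ := hv
    refine ⟨c * b⁻¹, mul_mem hc (inv_mem hb), ?_⟩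
    have hbu' : b • a0 = u := hbu
    have hcv' : c • a0 = v := hcv
    rw [mul_smul, ← hbu', inv_smul_smul, hcv']
  -- A acts freely
  have hfree : ∀ b ∈ A, ∀ z : Ω, b • z = z → b = 1 := by
    intro b hb z hbz
    apply hfaithful
    intro w
    obtain ⟨c, hc, hcw⟩ := htransA z w
    calc b • w = b • (c • z) := by rw [hcw]
    _ = (b * c) • z := by rw [mul_smul]
    _ = (c * b) • z := by rw [hcomm b hb c hc]
    _ = c • (b • z) := by rw [mul_smul]
    _ = w := by rw [hbz, hcw]
  -- |A| = |Ω|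
  haveI : Finite (Equiv.Perm Ω) :=
    Finite.of_injective (fun (f : Equiv.Perm Ω) => (f : Ω → Ω))
      (fun f g h => Equiv.coe_fn_injective h)
  have hAcard : Nat.card A = Fintype.card Ω := by
    have x0 : Ω := Classical.choice (Fintype.card_pos_iff.mp (by omega))
    rw [← Nat.card_eq_fintype_card]
    refine Nat.card_eq_of_bijective (fun b : A => (b : G) • x0) ⟨?_, ?_⟩
    · rintro ⟨b, hb⟩ ⟨c, hc⟩ hbc
      simp only at hbc
      have : (c⁻¹ * b) • x0 = x0 := by rw [mul_smul, hbc, inv_smul_smul]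
      have h1 : c⁻¹ * b = 1 := hfree _ (mul_mem (inv_mem hc) hb) x0 this
      have : b = c := by
        have := congrArg (c * ·) h1
        simpa [mul_assoc] using this
      exact Subtype.ext this
    · intro v
      obtain ⟨b, hb, hbv⟩ := htransA x0 v
      exact ⟨⟨b, hb⟩, hbv⟩
  -- main argument
  by_contra hg1
  obtain ⟨a, haA, hax⟩ := htransA x y
  have ha1 : a ≠ 1 := by
    rintro rfl
    rw [one_smul] at hax
    exact hxy hax
  have horder : orderOf a = Fintype.card Ω := by
    have h1 : orderOf a ∣ Nat.card A := Subgroup.orderOf_dvd_natCard A haA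
    rw [hAcard] at h1
    rcases (Nat.Prime.eq_one_or_self_of_dvd hp _ h1) with h | h
    · exact absurd (orderOf_eq_one_iff.mp h) ha1
    · exact h
  have hzp : Subgroup.zpowers a = A := by
    apply Subgroup.eq_of_le_of_card_ge ((Subgroup.zpowers_le (G := G)).mpr haA)
    rw [hAcard, Nat.card_zpowers, horder]
  have hconj : g * a * g⁻¹ = a := by
    have hmem : g * a * g⁻¹ ∈ A := hAnorm.conj_mem a haA g
    have heq : (g * a * g⁻¹) • x = a • x := by
      have hgx : g⁻¹ • x = x := by
        rw [inv_smul_eq_iff, hx]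
      rw [mul_smul, mul_smul, hgx, hax, hy]
    have hbx : ((g * a * g⁻¹)⁻¹ * a) • x = x := by
      rw [mul_smul, ← heq, inv_smul_smul]
    have h1 : (g * a * g⁻¹)⁻¹ * a = 1 :=
      hfree _ (mul_mem (inv_mem hmem) haA) x hbx
    exact (inv_mul_eq_one.mp h1)
  have hcga : Commute g a := by
    have := congrArg (· * g) hconj
    have h' : g * a = a * g := by simpa [mul_assoc] using this
    exact h'
  apply hg1
  apply hfaithful
  intro z
  obtain ⟨c, hcA, hcz⟩ := htransA x z
  obtain ⟨k, hk⟩ := Subgroup.mem_zpowers_iff.mp (hzp ▸ hcA)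
  have hcgc : Commute g c := hk ▸ hcga.zpow_right k
  calc g • z = g • (c • x) := by rw [hcz]
  _ = (g * c) • x := by rw [mul_smul]
  _ = (c * g) • x := by rw [hcgc.eq]
  _ = c • (g • x) := by rw [mul_smul]
  _ = z := by rw [hx, hcz]

section Stabilizers

variable {Ω : Type*} [Fintype Ω] {G : Subgroup (Equiv.Perm Ω)}

/-- Setwise stabilizer of a pair: required structure. -/
theorem req_pair
    (hfix : ∀ (g : G) (u v : Ω), g • u = u → g • v = v → u ≠ v → g = 1)
    {x y : Ω} (hxy : x ≠ y) :
    RequiredStructure (MulAction.stabilizer G ({x, y} : Set Ω)) := by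
  apply requiredStructure_of_sq
  intro s
  have hs : (s : G) • ({x, y} : Set Ω) = {x, y} := s.2
  have hsx : (s : G) • x ∈ ({x, y} : Set Ω) := by
    have h := Set.smul_mem_smul_set (a := (s : G))
      (Set.mem_insert x {y})
    rwa [hs] at h
  have hsy : (s : G) • y ∈ ({x, y} : Set Ω) := by
    have h := Set.smul_mem_smul_set (a := (s : G))
      (Set.mem_insert_of_mem x (Set.mem_singleton y))
    rwa [hs] at h
  have hsx' : (s : G) • x = x ∨ (s : G) • x = y := by simpa using hsx
  have hsy' : (s : G) • y = x ∨ (s : G) • y = y := by simpa using hsy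
  have hsq : ((s : G)) ^ 2 = 1 := by
    rcases hsx' with h1 | h1
    · have h2 : (s : G) • y = y := by
        rcases hsy' with h2 | h2
        · exact absurd (smul_left_cancel (s : G) (h2.trans h1.symm)) (Ne.symm hxy)
        · exact h2
      have hone : (s : G) = 1 := hfix _ x y h1 h2 hxy
      rw [hone, one_pow]
    · have h2 : (s : G) • y = x := by
        rcases hsy' with h2 | h2
        · exact h2
        · exact absurd (smul_left_cancel (s : G) (h1.trans h2.symm)) hxy
      have hx2 : ((s : G) ^ 2) • x = x := by
        rw [pow_two, mul_smul, h1, h2]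
      have hy2 : ((s : G) ^ 2) • y = y := by
        rw [pow_two, mul_smul, h2, h1]
      exact hfix _ x y hx2 hy2 hxy
  exact Subtype.ext (by rw [SubmonoidClass.coe_pow, hsq, OneMemClass.coe_one])

/-- Point stabilizer in degree 5: it is a 2-group. -/
theorem req_singleton
    (hfix : ∀ (g : G) (u v : Ω), g • u = u → g • v = v → u ≠ v → g = 1)
    (hcard5 : Fintype.card Ω = 5) (x : Ω) :
    RequiredStructure (MulAction.stabilizer G ({x} : Set Ω)) := by
  classical
  apply requiredStructure_of_isPGroup_two
  haveI : Fact (Nat.Prime 2) := ⟨Nat.prime_two⟩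
  rw [IsPGroup.iff_orderOf]
  intro s
  haveI : Finite (Equiv.Perm Ω) :=
    Finite.of_injective (fun (f : Equiv.Perm Ω) => (f : Ω → Ω))
      (fun f g h => Equiv.coe_fn_injective h)
  set t : G := (s : G) with htdef
  have htx : t • x = x := by
    have hs : t • ({x} : Set Ω) = {x} := s.2
    rw [Set.smul_set_singleton] at hs
    exact Set.singleton_eq_singleton_iff.mp hs
  have hts : orderOf t = orderOf s :=
    orderOf_injective (MulAction.stabilizer G ({x} : Set Ω)).subtype
      (Subgroup.subtype_injective _) s
  have hdvd2 : ∀ q : ℕ, q.Prime → q ∣ orderOf t → q = 2 := by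
    intro q hq hqd
    have hto : orderOf t ≠ 0 := by
      have : IsOfFinOrder t := isOfFinOrder_of_finite t
      exact this.orderOf_pos.ne'
    set h : G := t ^ (orderOf t / q) with hhdef
    have hoh : orderOf h = q := orderOf_pow_orderOf_div hto hqd
    have hh1 : h ≠ 1 := by
      intro h1
      rw [h1, orderOf_one] at hoh
      exact absurd hoh.symm hq.one_lt.ne'
    have hhx : h • x = x := by
      have : t ∈ MulAction.stabilizer G x := htx
      have : h ∈ MulAction.stabilizer G x := pow_mem this _
      exact this
    -- the cyclic group generated by h is a q-group acting on Ω
    set H : Subgroup G := Subgroup.zpowers h with hHdef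
    haveI : Fact (Nat.Prime q) := ⟨hq⟩
    have hHq : IsPGroup q H := by
      apply IsPGroup.of_card (n := 1)
      rw [Nat.card_zpowers, hoh, pow_one]
    have hfixed : MulAction.fixedPoints H Ω = {x} := by
      ext w
      simp only [MulAction.mem_fixedPoints, Set.mem_singleton_iff]
      constructor
      · intro hw
        by_contra hwx
        have hhw : h • w = w := hw ⟨h, Subgroup.mem_zpowers h⟩
        exact hh1 (hfix h w x hhw hhx hwx)
      · intro hwx u
        rw [hwx]
        obtain ⟨k, hk⟩ := Subgroup.mem_zpowers_iff.mp u.2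
        have hmem : (u : G) ∈ MulAction.stabilizer G x := by
          have hh : h ∈ MulAction.stabilizer G x := hhx
          rw [← hk]
          exact zpow_mem hh k
        exact hmem
    have hmod := hHq.card_modEq_card_fixedPoints Ω
    rw [hfixed] at hmod
    have hc1 : Nat.card ({x} : Set Ω) = 1 := by simp
    rw [hc1, Nat.card_eq_fintype_card, hcard5] at hmod
    have : q ∣ 4 := (Nat.modEq_iff_dvd' (by norm_num)).mp hmod.symm
    have : q ∣ 2 := hq.dvd_of_dvd_pow (n := 2) (by norm_num [this] : q ∣ 2 ^ 2)
    exact (Nat.prime_dvd_prime_iff_eq hq Nat.prime_two).mp this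
  rcases eq_or_ne (orderOf t) 1 with h1 | h1
  · exact ⟨0, by rw [← hts, h1, pow_zero]⟩
  · have hne0 : orderOf t ≠ 0 := (isOfFinOrder_of_finite t).orderOf_pos.ne'
    refine ⟨(orderOf t).primeFactorsList.length, ?_⟩
    rw [← hts]
    exact Nat.eq_prime_pow_of_unique_prime_dvd hne0 (fun {d} hd hdd => hdvd2 d hd hdd)

set_option maxHeartbeats 1000000 in
/-- Setwise stabilizer of a triple: required structure. -/
theorem req_triple
    (hfix : ∀ (g : G) (u v : Ω), g • u = u → g • v = v → u ≠ v → g = 1)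
    {x y z : Ω} (hxy : x ≠ y) (hxz : x ≠ z) (hyz : y ≠ z) :
    RequiredStructure (MulAction.stabilizer G ({x, y, z} : Set Ω)) := by
  classical
  set Δ : Set Ω := {x, y, z} with hΔdef
  haveI : Fintype Δ := Fintype.ofFinite Δ
  set S := MulAction.stabilizer G Δ with hSdef
  have hmemiff : ∀ (s : S) (w : Ω), w ∈ Δ ↔ (s : G) • w ∈ Δ := by
    intro s w
    have hs : (s : G) • Δ = Δ := s.2
    constructor
    · intro hw
      rw [← hs]
      exact Set.smul_mem_smul_set hw
    · intro hw
      rw [← hs] at hw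
      exact (Set.smul_mem_smul_set_iff).mp hw
  -- restriction homomorphism to Perm Δ
  let π : S →* Equiv.Perm Δ :=
    { toFun := fun s => Equiv.Perm.subtypePerm ((s : G) : Equiv.Perm Ω) (fun w => (hmemiff s w).symm)
      map_one' := by
        ext w
        simp [Equiv.Perm.subtypePerm_apply]
      map_mul' := by
        intro s t
        ext w
        rfl }
  have hπapp : ∀ (s : S) (w : Δ), ((π s w : Ω)) = (s : G) • (w : Ω) := fun s w => rfl
  have hπinj : Function.Injective π := by
    intro s t hst
    have hx' : x ∈ Δ := by simp [hΔdef]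
    have hy' : y ∈ Δ := by simp [hΔdef]
    have key : ∀ w : Ω, w ∈ Δ → (s : G) • w = (t : G) • w := by
      intro w hw
      have := congrArg (fun f => ((f ⟨w, hw⟩ : Δ) : Ω)) hst
      simpa [hπapp] using this
    have h1 : ((t : G)⁻¹ * (s : G)) • x = x := by
      rw [mul_smul, key x hx', inv_smul_smul]
    have h2 : ((t : G)⁻¹ * (s : G)) • y = y := by
      rw [mul_smul, key y hy', inv_smul_smul]
    have := hfix _ x y h1 h2 hxy
    have : (s : G) = (t : G) := by
      have h' := congrArg ((t : G) * ·) this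
      simpa [mul_assoc] using h'
    exact Subtype.ext this
  -- Δ has three elements
  have hΔ3 : Fintype.card Δ = 3 := by
    rw [← Nat.card_eq_fintype_card, Nat.card_coe_set_eq, hΔdef]
    rw [Set.ncard_insert_of_notMem (by simp [hxy, hxz]), Set.ncard_pair hyz]
  haveI : Nontrivial Δ := by
    rw [← Fintype.one_lt_card_iff_nontrivial, hΔ3]; norm_num
  have hA3 : Fintype.card (alternatingGroup Δ) = 3 := by
    have h2 := two_mul_card_alternatingGroup (α := Δ)
    rw [Fintype.card_perm, hΔ3] at h2
    have h6 : (3:ℕ).factorial = 6 := by decide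
    rw [h6] at h2
    omega
  -- the normal subgroup N
  set φ : S →* ℤˣ := Equiv.Perm.sign.comp π with hφdef
  refine ⟨φ.ker, MonoidHom.normal_ker φ, ?_, ?_, ?_⟩
  · -- commutativity
    intro g hg h hh
    have hgA : π g ∈ alternatingGroup Δ := by
      rw [Equiv.Perm.mem_alternatingGroup]; exact hg
    have hhA : π h ∈ alternatingGroup Δ := by
      rw [Equiv.Perm.mem_alternatingGroup]; exact hh
    haveI : Fact (Nat.Prime 3) := ⟨Nat.prime_three⟩
    haveI : IsCyclic (alternatingGroup Δ) :=
      isCyclic_of_prime_card (by rw [Nat.card_eq_fintype_card, hA3])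
    obtain ⟨c, hc⟩ := IsCyclic.exists_generator (α := alternatingGroup Δ)
    obtain ⟨i, hi⟩ := Subgroup.mem_zpowers_iff.mp (hc ⟨π g, hgA⟩)
    obtain ⟨j, hj⟩ := Subgroup.mem_zpowers_iff.mp (hc ⟨π h, hhA⟩)
    have hcomm : (⟨π g, hgA⟩ : alternatingGroup Δ) * ⟨π h, hhA⟩ =
        ⟨π h, hhA⟩ * ⟨π g, hgA⟩ := by
      rw [← hi, ← hj, ← zpow_add, ← zpow_add, add_comm]
    have hππ : π g * π h = π h * π g := by
      have h' := Subtype.ext_iff.mp hcomm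
      simpa using h'
    apply hπinj
    rw [map_mul, map_mul, hππ]
  · -- exponent 3
    intro g hg
    have hgA : π g ∈ alternatingGroup Δ := by
      rw [Equiv.Perm.mem_alternatingGroup]; exact hg
    have h3 : (⟨π g, hgA⟩ : alternatingGroup Δ) ^ 3 = 1 := by
      have h' := pow_card_eq_one (G := alternatingGroup Δ) (x := ⟨π g, hgA⟩)
      rwa [hA3] at h'
    have hπ3 : (π g) ^ 3 = 1 := by
      have h' := Subtype.ext_iff.mp h3
      simpa using h'
    apply hπinj
    rw [map_pow, hπ3, map_one]
  · -- quotient is a 2-group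
    intro q
    refine ⟨1, ?_⟩
    rw [pow_one]
    induction q using QuotientGroup.induction_on with
    | H s =>
      rw [← QuotientGroup.mk_pow, QuotientGroup.eq_one_iff]
      have : φ (s ^ 2) = 1 := by
        rw [map_pow, Int.units_sq]
      exact this

end Stabilizers

/-- Lemma 2.4: a primitive solvable permutation group of prime degree `p ≥ 5` is nice. -/
theorem stmt_12 {Ω : Type*} [Fintype Ω] (G : Subgroup (Equiv.Perm Ω))
    (hsolv : IsSolvable G) (hprim : IsPrimitivePermGroup Ω G)
    (p : ℕ) (hp : p.Prime) (hp5 : 5 ≤ p) (hcard : Fintype.card Ω = p) :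
    IsNice Ω G := by
  classical
  have hfix : ∀ (g : G) (u v : Ω), g • u = u → g • v = v → u ≠ v → g = 1 :=
    fun g u v hu hv huv => two_fixed_points hsolv hprim (hcard ▸ hp) hu hv huv
  -- pick three distinct points
  have h3 : 3 ≤ Fintype.card Ω := by rw [hcard]; omega
  obtain ⟨x, y, hxy⟩ := Fintype.exists_pair_of_one_lt_card (by rw [hcard]; omega)
  have hz : ∃ z : Ω, z ≠ x ∧ z ≠ y := by
    by_contra hno
    push_neg at hno
    have hsub : (Finset.univ : Finset Ω) ⊆ {x, y} := by
      intro w _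
      rcases Classical.em (w = x) with h | h
      · simp [h]
      · simp [hno w h]
    have := Finset.card_le_card hsub
    have h2 : ({x, y} : Finset Ω).card ≤ 2 := Finset.card_insert_le x {y} |>.trans (by simp)
    rw [Finset.card_univ] at this
    omega
  obtain ⟨z, hzx, hzy⟩ := hz
  by_cases h5 : p = 5
  · -- Δ₁ = {x}, Δ₂ = {x, y}
    refine ⟨{x}, {x, y}, ?_, ?_, ?_, ?_⟩
    · rw [Set.ncard_singleton, Set.ncard_pair hxy]; norm_num
    · rw [Set.ncard_pair hxy, hcard, h5]; norm_num
    · exact req_singleton hfix (by rw [hcard, h5]) x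
    · exact req_pair hfix hxy
  · -- p ≥ 7 : Δ₁ = {x, y}, Δ₂ = {x, y, z}
    have h7 : 7 ≤ p := by
      rcases Nat.lt_or_ge p 7 with h | h
      · interval_cases p
        · omega
        · norm_num at hp
      · exact h
    refine ⟨{x, y}, {x, y, z}, ?_, ?_, ?_, ?_⟩
    · rw [Set.ncard_pair hxy,
        Set.ncard_insert_of_notMem (by simp [hxy, Ne.symm hzx]), Set.ncard_pair (Ne.symm hzy)]
      norm_num
    · rw [Set.ncard_insert_of_notMem (by simp [hxy, Ne.symm hzx]), Set.ncard_pair (Ne.symm hzy),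
        hcard]
      omega
    · exact req_pair hfix hxy
    · exact req_triple hfix hxy (Ne.symm hzx) (Ne.symm hzy)
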